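/- Suppose sequences (uₙ) of nonzero rationals satisfy uₙ₊₁uₙ₋₁ = 1 + 1/uₙ for all n. Then the quantity J(u,v) = u + v + 1/u + 1/v + 1/(uv) is invariant: J(uₙ₋₁, uₙ) = J(uₙ, uₙ₊₁) for all n. -/

import Mathlib

/-- The quantity J(u,v) = u + v + 1/u + 1/v + 1/(uv) is conserved by the QRT
recurrence uₙ₊₁uₙ₋₁ = 1 + 1/uₙ. -/
theorem qrt_conserved (u : ℤ → ℚ) (hne : ∀ n, u n ≠ 0)
    (hrec : ∀ n : ℤ, u (n + 1) * u (n - 1) = 1 + 1 / u n) :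
    ∀ n : ℤ,
      u (n - 1) + u n + 1 / u (n - 1) + 1 / u n + 1 / (u (n - 1) * u n) =
      u n + u (n + 1) + 1 / u n + 1 / u (n + 1) + 1 / (u n * u (n + 1)) := by
  intro n
  have ha := hne (n - 1)
  have hb := hne n
  have hc := hne (n + 1)
  have h := hrec n
  field_simp at h ⊢
  linear_combination (u (n-1) - u (n+1)) * h
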